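/- For every reduced strategy σ ∈ S, the sum over all actions a ∈ A(σ) of 1/β(a) equals 1. -/

import Mathlib

open scoped Classical

/-- A finite rooted tree whose internal nodes are partitioned into infosets `N`
and actions `A`: the root is an infoset, every child of an infoset is an action,
every child of an action is an infoset or a leaf, and every infoset has at
least two children.  The tree structure is given by a parent function together
with a depth function witnessing well-foundedness. -/
structure EFTree (V : Type*) [Fintype V] [DecidableEq V] where
  root : V
  parent : V → V
  parent_root : parent root = root
  depth : V → ℕ
  depth_root : depth root = 0
  depth_parent : ∀ v : V, v ≠ root → depth v = depth (parent v) + 1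
  N : Finset V
  A : Finset V
  disj : Disjoint N A
  internal_iff : ∀ v : V, (v ∈ N ∨ v ∈ A) ↔ ∃ u : V, u ≠ root ∧ parent u = v
  root_N : root ∈ N
  infoset_child : ∀ u : V, u ≠ root → parent u ∈ N → u ∈ A
  action_child : ∀ u : V, u ≠ root → parent u ∈ A → u ∉ A
  branching : ∀ v ∈ N, 1 < (Finset.univ.filter fun u => u ≠ root ∧ parent u = v).card

namespace EFTree

variable {V : Type*} [Fintype V] [DecidableEq V] (T : EFTree V)

/-- The set `C(v)` of children of a node `v`. -/
def children (v : V) : Finset V := Finset.univ.filter fun u => u ≠ T.root ∧ T.parent u = v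

/-- The set `L` of leaves: the nodes that are neither infosets nor actions. -/
def leaves : Finset V := Finset.univ \ (T.N ∪ T.A)

/-- `Desc u v` means `u` is a descendant of `v` (every node is a descendant of itself). -/
def Desc (u v : V) : Prop := ∃ k : ℕ, T.parent^[k] u = v

/-- The reachable set `V(σ)` of a (sub-)strategy `σ` started at the node `w`:
the minimal set of nodes containing `w`, containing `σ v` for every infoset `v`
in the set, and containing all children of every action in the set. -/
def reachFrom (w : V) (σ : V → V) : Set V :=
  ⋂₀ {s : Set V | w ∈ s ∧ (∀ v ∈ T.N, v ∈ s → σ v ∈ s) ∧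
      ∀ a ∈ T.A, a ∈ s → ∀ u ∈ T.children a, u ∈ s}

/-- The reachable set `V(σ)` of a strategy `σ`. -/
def reachS (σ : V → V) : Set V := T.reachFrom T.root σ

/-- `σ : V → V` canonically represents a reduced sub-strategy at the node `w`:
at every infoset in its reachable set it selects a child, and everywhere else it
is the identity (so that each reduced sub-strategy, i.e. each restriction of a
sub-strategy at `w` to the infosets it can reach, has exactly one
representative). -/
def IsRedSubStrat (w : V) (σ : V → V) : Prop :=
  (∀ v ∈ T.N, v ∈ T.reachFrom w σ → σ v ∈ T.children v) ∧
  ∀ v : V, ¬(v ∈ T.N ∧ v ∈ T.reachFrom w σ) → σ v = v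

/-- `σ : V → V` canonically represents a reduced strategy, i.e. a member of `S`. -/
def IsRedStrat (σ : V → V) : Prop := T.IsRedSubStrat T.root σ

/-- The set `A(σ) = A ∩ V(σ)` of actions reachable under a reduced (sub-)strategy. -/
noncomputable def Aset (σ : V → V) : Finset V := T.A.filter fun a => a ∈ T.reachS σ

/-- The set `A(σ) = A ∩ V(σ)` for a reduced sub-strategy at `w`. -/
noncomputable def AsetFrom (w : V) (σ : V → V) : Finset V := T.A.filter fun a => a ∈ T.reachFrom w σ

/-- An environment chooses a child of every action. -/
def IsEnv (μ : V → V) : Prop := ∀ a ∈ T.A, μ a ∈ T.children a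

/-- The reachable set `V(μ)` of an environment `μ`: the minimal set of nodes
containing the root, all children of every infoset in the set, and `μ a` for
every action `a` in the set. -/
def reachE (μ : V → V) : Set V :=
  ⋂₀ {s : Set V | T.root ∈ s ∧ (∀ v ∈ T.N, v ∈ s → ∀ u ∈ T.children v, u ∈ s) ∧
      ∀ a ∈ T.A, a ∈ s → μ a ∈ s}

/-- `Z(μ)`: the set of actions reachable under `μ` whose chosen child is a leaf. -/
noncomputable def Zset (μ : V → V) : Finset V := T.A.filter fun a => a ∈ T.reachE μ ∧ μ a ∈ T.leaves

/-- A policy assigns to each action a probability in `[0,1]`, summing to one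
over the children of each infoset. -/
def IsPolicy (π : V → ℝ) : Prop :=
  (∀ a ∈ T.A, 0 ≤ π a ∧ π a ≤ 1) ∧ ∀ v ∈ T.N, ∑ a ∈ T.children v, π a = 1

/-- The root-to-leaf path traversed when the reduced strategy `σ` is played
against the environment `μ`: the minimal set of nodes containing the root,
containing `σ v` for every infoset `v` in the set, and `μ a` for every action
`a` in the set. -/
def playPath (σ μ : V → V) : Set V :=
  ⋂₀ {s : Set V | T.root ∈ s ∧ (∀ v ∈ T.N, v ∈ s → σ v ∈ s) ∧
      ∀ a ∈ T.A, a ∈ s → μ a ∈ s}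

/-- `z` is the last action node on the play path of `(σ, μ)`: it is an action on
the path of which every other action on the path is an ancestor. -/
def IsLastAction (σ μ : V → V) (z : V) : Prop :=
  z ∈ T.A ∧ z ∈ T.playPath σ μ ∧ ∀ a ∈ T.A, a ∈ T.playPath σ μ → T.Desc z a

end EFTree

namespace EFTree

variable {V : Type*} [Fintype V] [DecidableEq V] (T : EFTree V)

lemma mem_children_iff {u v : V} : u ∈ T.children v ↔ u ≠ T.root ∧ T.parent u = v := by
  simp [children]

lemma root_eq_of_depth_eq_zero {v : V} (h : T.depth v = 0) : v = T.root := by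
  by_contra hv
  rw [T.depth_parent v hv] at h
  omega

lemma parent_iterate_root (n : ℕ) : T.parent^[n] T.root = T.root := by
  induction n with
  | zero => rfl
  | succ n ih => rw [Function.iterate_succ_apply', ih, T.parent_root]

lemma depth_parent_le (v : V) : T.depth (T.parent v) ≤ T.depth v := by
  by_cases h : v = T.root
  · rw [h, T.parent_root]
  · rw [T.depth_parent v h]; omega

lemma depth_iterate_le (j : ℕ) (v : V) : T.depth (T.parent^[j] v) ≤ T.depth v := by
  induction j with
  | zero => exact le_rfl
  | succ j ih =>
    rw [Function.iterate_succ_apply']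
    exact le_trans (T.depth_parent_le _) ih

lemma desc_depth_le {u v : V} (h : T.Desc u v) : T.depth v ≤ T.depth u := by
  obtain ⟨k, hk⟩ := h
  rw [← hk]
  exact T.depth_iterate_le k u

lemma eq_of_iterate_of_depth_le {j : ℕ} {x y : V} (h : T.parent^[j] x = y)
    (hd : T.depth x ≤ T.depth y) : x = y := by
  by_cases hx : x = T.root
  · rw [← h, hx, T.parent_iterate_root]
  · cases j with
    | zero => exact h
    | succ j =>
      exfalso
      rw [Function.iterate_succ_apply] at h
      have h1 : T.depth y ≤ T.depth (T.parent x) := by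
        rw [← h]; exact T.depth_iterate_le j (T.parent x)
      have h2 := T.depth_parent x hx
      omega

lemma depth_iterate_eq {v : V} : ∀ k, k ≤ T.depth v → T.depth (T.parent^[k] v) = T.depth v - k := by
  intro k
  induction k with
  | zero => intro _; simp
  | succ k ih =>
    intro hk
    have h1 := ih (by omega)
    have hne : T.parent^[k] v ≠ T.root := by
      intro h; rw [h, T.depth_root] at h1; omega
    have h2 := T.depth_parent _ hne
    rw [Function.iterate_succ_apply']
    omega

lemma depth_lt_card (v : V) : T.depth v < Fintype.card V := by
  have hinj : Function.Injective (fun k : Fin (T.depth v + 1) => T.parent^[(k : ℕ)] v) := by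
    intro k k' h
    simp only at h
    have h1 := T.depth_iterate_eq (v := v) k (by omega)
    have h2 := T.depth_iterate_eq (v := v) k' (by omega)
    rw [h] at h1
    have hk := k.isLt
    have hk' := k'.isLt
    exact Fin.ext (by omega)
  have := Fintype.card_le_of_injective _ hinj
  simp only [Fintype.card_fin] at this
  omega

variable {σ : V → V}

lemma reachS_subset {s : Set V} (h1 : T.root ∈ s)
    (h2 : ∀ v ∈ T.N, v ∈ s → σ v ∈ s)
    (h3 : ∀ a ∈ T.A, a ∈ s → ∀ u ∈ T.children a, u ∈ s) :
    T.reachS σ ⊆ s :=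
  Set.sInter_subset_of_mem ⟨h1, h2, h3⟩

lemma root_mem_reachS : T.root ∈ T.reachS σ :=
  Set.mem_sInter.2 fun _ hs => hs.1

lemma sigma_mem_reachS {v : V} (hv : v ∈ T.N) (h : v ∈ T.reachS σ) : σ v ∈ T.reachS σ :=
  Set.mem_sInter.2 fun s hs => hs.2.1 v hv (Set.mem_sInter.1 h s hs)

lemma child_mem_reachS {a u : V} (ha : a ∈ T.A) (h : a ∈ T.reachS σ) (hu : u ∈ T.children a) :
    u ∈ T.reachS σ :=
  Set.mem_sInter.2 fun s hs => hs.2.2 a ha (Set.mem_sInter.1 h s hs) u hu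

lemma reach_parent (hσ : T.IsRedStrat σ) {u : V} (hu : u ∈ T.reachS σ) (hur : u ≠ T.root) :
    T.parent u ∈ T.reachS σ ∧ (T.parent u ∈ T.N → u = σ (T.parent u)) := by
  set s : Set V := {u | u ∈ T.reachS σ ∧ (u = T.root ∨
      (T.parent u ∈ T.reachS σ ∧ (T.parent u ∈ T.N → u = σ (T.parent u))))} with hs
  have hsub : T.reachS σ ⊆ s := by
    refine T.reachS_subset ⟨T.root_mem_reachS, Or.inl rfl⟩ ?_ ?_
    · intro v hv hvs
      have hvr : v ∈ T.reachS σ := hvs.1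
      have hc : σ v ∈ T.children v := hσ.1 v hv hvr
      rw [T.mem_children_iff] at hc
      refine ⟨T.sigma_mem_reachS hv hvr, Or.inr ⟨?_, ?_⟩⟩
      · rw [hc.2]; exact hvr
      · intro _; rw [hc.2]
    · intro a ha has u hu
      have har : a ∈ T.reachS σ := has.1
      have hc := T.mem_children_iff.1 hu
      refine ⟨T.child_mem_reachS ha har hu, Or.inr ⟨?_, ?_⟩⟩
      · rw [hc.2]; exact har
      · intro hN
        rw [hc.2] at hN
        exact absurd ha (Finset.disjoint_left.1 T.disj hN)
  rcases (hsub hu).2 with h | h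
  · exact absurd h hur
  · exact h

lemma anc_mem_reachS (hσ : T.IsRedStrat σ) {b : V} (hb : b ∈ T.reachS σ) (j : ℕ) :
    T.parent^[j] b ∈ T.reachS σ := by
  induction j with
  | zero => exact hb
  | succ j ih =>
    rw [Function.iterate_succ_apply']
    by_cases h : T.parent^[j] b = T.root
    · rw [h, T.parent_root]; exact T.root_mem_reachS
    · exact (T.reach_parent hσ ih h).1

/-- The reachable actions descending from `v`. -/
noncomputable def Dset (σ : V → V) (v : V) : Finset V :=
  T.A.filter fun a => a ∈ T.reachS σ ∧ T.Desc a v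

lemma mem_Dset {v b : V} :
    b ∈ T.Dset σ v ↔ b ∈ T.A ∧ (b ∈ T.reachS σ ∧ T.Desc b v) := by
  rw [Dset, Finset.mem_filter]

lemma reach_desc_N (hσ : T.IsRedStrat σ) {v : V} (hvN : v ∈ T.N) :
    ∀ k (b : V), b ∈ T.A → b ∈ T.reachS σ → T.parent^[k] b = v → T.Desc b (σ v) := by
  intro k
  induction k using Nat.strong_induction_on with
  | _ k ih =>
    intro b hbA hbr hk
    cases k with
    | zero =>
      simp only [Function.iterate_zero_apply] at hk
      exact absurd (by rw [hk]; exact hvN) (Finset.disjoint_right.1 T.disj hbA)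
    | succ j =>
      have hcr : T.parent^[j] b ∈ T.reachS σ := T.anc_mem_reachS hσ hbr j
      have hpc : T.parent (T.parent^[j] b) = v := by
        rw [← Function.iterate_succ_apply' T.parent j b]; exact hk
      by_cases hc : T.parent^[j] b = T.root
      · have hv : v = T.root := by rw [← hpc, hc, T.parent_root]
        exact ih j (by omega) b hbA hbr (by rw [hc, hv])
      · have h2 := (T.reach_parent hσ hcr hc).2 (by rw [hpc]; exact hvN)
        rw [hpc] at h2
        exact ⟨j, h2⟩

lemma reach_desc_A (hσ : T.IsRedStrat σ) {a : V} (haA : a ∈ T.A) :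
    ∀ k (b : V), b ∈ T.A → b ∈ T.reachS σ → T.parent^[k] b = a →
      b = a ∨ ∃ u, u ∈ T.children a ∧ u ∈ T.N ∧ T.Desc b u := by
  intro k b hbA hbr hk
  cases k with
  | zero =>
    simp only [Function.iterate_zero_apply] at hk
    exact Or.inl hk
  | succ j =>
    have hpc : T.parent (T.parent^[j] b) = a := by
      rw [← Function.iterate_succ_apply' T.parent j b]; exact hk
    have hc : T.parent^[j] b ≠ T.root := by
      intro h
      rw [h, T.parent_root] at hpc
      exact Finset.disjoint_left.1 T.disj T.root_N (by rw [hpc]; exact haA)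
    have hcnA : T.parent^[j] b ∉ T.A :=
      T.action_child _ hc (by rw [hpc]; exact haA)
    cases j with
    | zero =>
      simp only [Function.iterate_zero_apply] at hcnA
      exact absurd hbA hcnA
    | succ i =>
      have hich : T.parent^[i] b ≠ T.root := by
        intro h
        apply hc
        rw [Function.iterate_succ_apply', h, T.parent_root]
      have hcN : T.parent^[i + 1] b ∈ T.N := by
        rcases (T.internal_iff (T.parent^[i + 1] b)).2
            ⟨T.parent^[i] b, hich, (Function.iterate_succ_apply' _ _ _).symm⟩ with h | h
        · exact h
        · exact absurd h hcnA
      exact Or.inr ⟨T.parent^[i + 1] b, T.mem_children_iff.2 ⟨hc, hpc⟩, hcN, ⟨i + 1, rfl⟩⟩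

lemma Dset_eq_of_N (hσ : T.IsRedStrat σ) {v : V} (hvN : v ∈ T.N) (hvr : v ∈ T.reachS σ) :
    T.Dset σ v = T.Dset σ (σ v) := by
  have hc : σ v ∈ T.children v := hσ.1 v hvN hvr
  have hpc : T.parent (σ v) = v := (T.mem_children_iff.1 hc).2
  ext b
  rw [T.mem_Dset, T.mem_Dset]
  constructor
  · rintro ⟨hbA, hbr, hd⟩
    obtain ⟨k, hk⟩ := hd
    exact ⟨hbA, hbr, T.reach_desc_N hσ hvN k b hbA hbr hk⟩
  · rintro ⟨hbA, hbr, hd⟩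
    obtain ⟨k, hk⟩ := hd
    exact ⟨hbA, hbr, ⟨k + 1, by rw [Function.iterate_succ_apply', hk, hpc]⟩⟩

lemma Dset_eq_of_A (hσ : T.IsRedStrat σ) {a : V} (haA : a ∈ T.A) (har : a ∈ T.reachS σ) :
    T.Dset σ a = insert a (((T.children a).filter (· ∈ T.N)).biUnion (T.Dset σ)) := by
  ext b
  rw [T.mem_Dset, Finset.mem_insert, Finset.mem_biUnion]
  constructor
  · rintro ⟨hbA, hbr, hd⟩
    obtain ⟨k, hk⟩ := hd
    rcases T.reach_desc_A hσ haA k b hbA hbr hk with h | ⟨u, hu, huN, hdu⟩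
    · exact Or.inl h
    · exact Or.inr ⟨u, Finset.mem_filter.2 ⟨hu, huN⟩, T.mem_Dset.2 ⟨hbA, hbr, hdu⟩⟩
  · rintro (rfl | ⟨u, hu, hb⟩)
    · exact ⟨haA, har, ⟨0, rfl⟩⟩
    · obtain ⟨huc, _⟩ := Finset.mem_filter.1 hu
      obtain ⟨hbA, hbr, hd⟩ := T.mem_Dset.1 hb
      obtain ⟨k, hk⟩ := hd
      exact ⟨hbA, hbr, ⟨k + 1,
        by rw [Function.iterate_succ_apply', hk, (T.mem_children_iff.1 huc).2]⟩⟩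

lemma not_desc_of_child {a u : V} (hu : u ∈ T.children a) : ¬ T.Desc a u := by
  intro h
  have h1 := T.desc_depth_le h
  obtain ⟨hur, hpu⟩ := T.mem_children_iff.1 hu
  have h2 := T.depth_parent u hur
  rw [hpu] at h2
  omega

lemma eq_of_two_iterates {b u u' : V} {k k' : ℕ} (hk : T.parent^[k] b = u)
    (hk' : T.parent^[k'] b = u') (hkk : k ≤ k') (hd : T.depth u ≤ T.depth u') : u = u' := by
  have h : T.parent^[k' - k + k] b = u' := by rw [Nat.sub_add_cancel hkk]; exact hk'
  rw [Function.iterate_add_apply, hk] at h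
  exact T.eq_of_iterate_of_depth_le h hd

lemma Dset_pairwiseDisjoint {a : V} :
    (↑((T.children a).filter (· ∈ T.N)) : Set V).PairwiseDisjoint (T.Dset σ) := by
  intro u hu u' hu' hne
  simp only [Finset.coe_filter, Set.mem_setOf_eq] at hu hu'
  have hdu : T.depth u = T.depth a + 1 := by
    obtain ⟨hr, hp⟩ := T.mem_children_iff.1 hu.1
    rw [T.depth_parent u hr, hp]
  have hdu' : T.depth u' = T.depth a + 1 := by
    obtain ⟨hr, hp⟩ := T.mem_children_iff.1 hu'.1
    rw [T.depth_parent u' hr, hp]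
  refine Finset.disjoint_left.2 ?_
  intro b hb hb'
  obtain ⟨_, _, hd⟩ := T.mem_Dset.1 hb
  obtain ⟨_, _, hd'⟩ := T.mem_Dset.1 hb'
  obtain ⟨k, hk⟩ := hd
  obtain ⟨k', hk'⟩ := hd'
  rcases le_total k k' with h | h
  · exact hne (T.eq_of_two_iterates hk hk' h (by omega))
  · exact hne (T.eq_of_two_iterates hk' hk h (by omega)).symm

lemma not_mem_biUnion_Dset {a : V} :
    a ∉ ((T.children a).filter (· ∈ T.N)).biUnion (T.Dset σ) := by
  intro h
  obtain ⟨u, hu, ha⟩ := Finset.mem_biUnion.1 h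
  obtain ⟨huc, _⟩ := Finset.mem_filter.1 hu
  exact T.not_desc_of_child huc (T.mem_Dset.1 ha).2.2

lemma main_sum (m : V → ℕ)
    (hmA : ∀ a ∈ T.A, m a = 1 + ∑ v ∈ (T.children a).filter (· ∈ T.N), m v)
    (β : V → ℝ)
    (hβA : ∀ a ∈ T.A, β a = (m a : ℝ) * β (T.parent a))
    (hβN : ∀ v ∈ T.N, v ≠ T.root → β v = β (T.parent v) / (m v : ℝ))
    (hσ : T.IsRedStrat σ) :
    ∀ n (v : V), v ∈ T.N → v ∈ T.reachS σ → Fintype.card V ≤ T.depth v + n →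
      ∑ a ∈ T.Dset σ v, (1 : ℝ) / β a = 1 / β v := by
  intro n
  induction n with
  | zero =>
    intro v _ _ h
    have := T.depth_lt_card v
    omega
  | succ n ih =>
    intro v hvN hvr hcard
    have hc : σ v ∈ T.children v := hσ.1 v hvN hvr
    obtain ⟨har, hpa⟩ := T.mem_children_iff.1 hc
    have haA : σ v ∈ T.A := T.infoset_child (σ v) har (by rw [hpa]; exact hvN)
    have haR : σ v ∈ T.reachS σ := T.sigma_mem_reachS hvN hvr
    rw [T.Dset_eq_of_N hσ hvN hvr, T.Dset_eq_of_A hσ haA haR,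
      Finset.sum_insert T.not_mem_biUnion_Dset, Finset.sum_biUnion T.Dset_pairwiseDisjoint]
    have hda : T.depth (σ v) = T.depth v + 1 := by rw [T.depth_parent (σ v) har, hpa]
    have hsum : ∀ u ∈ (T.children (σ v)).filter (· ∈ T.N),
        ∑ b ∈ T.Dset σ u, (1 : ℝ) / β b = (m u : ℝ) / β (σ v) := by
      intro u hu
      obtain ⟨huc, huN⟩ := Finset.mem_filter.1 hu
      obtain ⟨hur, hpu⟩ := T.mem_children_iff.1 huc
      have hdu : T.depth u = T.depth (σ v) + 1 := by rw [T.depth_parent u hur, hpu]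
      have h1 := ih u huN (T.child_mem_reachS haA haR huc) (by omega)
      rw [h1, hβN u huN hur, hpu, one_div_div]
    rw [Finset.sum_congr rfl hsum, ← Finset.sum_div, ← add_div]
    have hmane : m (σ v) ≠ 0 := by rw [hmA (σ v) haA]; omega
    have hma : (1 + ∑ u ∈ (T.children (σ v)).filter (· ∈ T.N), (m u : ℝ)) = (m (σ v) : ℝ) := by
      rw [hmA (σ v) haA]
      push_cast
      ring
    rw [hma, hβA (σ v) haA, hpa, div_mul_eq_div_div,
      div_self (Nat.cast_ne_zero.2 hmane)]

lemma iterate_depth_root : ∀ (n : ℕ) (v : V), T.depth v ≤ n → T.parent^[T.depth v] v = T.root := by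
  intro n
  induction n with
  | zero =>
    intro v h
    have hv := T.root_eq_of_depth_eq_zero (Nat.le_zero.1 h)
    rw [hv, T.depth_root]
    rfl
  | succ n ih =>
    intro v h
    by_cases hv : v = T.root
    · rw [hv, T.depth_root]; rfl
    · have hd := T.depth_parent v hv
      rw [hd, Function.iterate_succ_apply]
      exact ih (T.parent v) (by omega)

lemma desc_root (v : V) : T.Desc v T.root :=
  ⟨T.depth v, T.iterate_depth_root (T.depth v) v le_rfl⟩

lemma Aset_eq_Dset_root : T.Aset σ = T.Dset σ T.root := by
  apply Finset.filter_congr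
  intro a _
  simp [T.desc_root a]

end EFTree

theorem stmt4 {V : Type*} [Fintype V] [DecidableEq V] (T : EFTree V)
    (m : V → ℕ)
    (hmA : ∀ a ∈ T.A, m a = 1 + ∑ v ∈ (T.children a).filter (· ∈ T.N), m v)
    (hmN : ∀ v ∈ T.N, m v = ∑ a ∈ T.children v, m a)
    (β : V → ℝ) (hβr : β T.root = 1)
    (hβA : ∀ a ∈ T.A, β a = (m a : ℝ) * β (T.parent a))
    (hβN : ∀ v ∈ T.N, v ≠ T.root → β v = β (T.parent v) / (m v : ℝ))
    (σ : V → V) (hσ : T.IsRedStrat σ) :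
    ∑ a ∈ T.Aset σ, (1 : ℝ) / β a = 1 := by
  have key := T.main_sum m hmA β hβA hβN hσ (Fintype.card V) T.root T.root_N
    T.root_mem_reachS (by rw [T.depth_root]; omega)
  rw [T.Aset_eq_Dset_root, key, hβr]
  norm_num
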